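/- Let A be a normed unital algebra over ℂ, let τ : A → ℂ be a continuous linear functional with the trace property τ(x·y) = τ(y·x) for all x, y ∈ A, and let p : ℝ → A be a differentiable path of idempotents (p(t)·p(t) = p(t) for all t). Then the function t ↦ τ(p(t)) is constant on ℝ: τ(p(s)) = τ(p(t)) for all s, t ∈ ℝ. -/

import Mathlib

/-- Let `A` be a normed unital algebra over `ℂ`, `τ : A → ℂ` a continuous
linear functional with the trace property `τ (x * y) = τ (y * x)`, and `p : ℝ → A` a
differentiable path of idempotents.  Then `t ↦ τ (p t)` is constant on `ℝ`. -/
theorem stmt2 {A : Type*} [NormedRing A] [NormedAlgebra ℂ A]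
    (τ : A →L[ℂ] ℂ) (htrace : ∀ x y : A, τ (x * y) = τ (y * x))
    (p : ℝ → A) (hdiff : Differentiable ℝ p)
    (hidem : ∀ t : ℝ, p t * p t = p t) (s t : ℝ) :
    τ (p s) = τ (p t) := by
  have key : ∀ u : ℝ, HasDerivAt (fun x => τ (p x)) 0 u := by
    intro u
    set d := deriv p u with hd
    have hp : HasDerivAt p d u := (hdiff u).hasDerivAt
    have hsq : HasDerivAt (fun x => p x * p x) (d * p u + p u * d) u := hp.mul hp
    have hsq' : HasDerivAt (fun x => p x * p x) d u := by
      have h : (fun x => p x * p x) = p := funext hidem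
      rw [h]; exact hp
    have heq : d = d * p u + p u * d := hsq'.unique hsq
    have hpdp : p u * d * p u = 0 := by
      have h2 : p u * d * p u = p u * d * p u + p u * d * p u := by
        calc p u * d * p u = p u * (d * p u + p u * d) * p u := by rw [← heq]
          _ = p u * d * (p u * p u) + (p u * p u) * d * p u := by noncomm_ring
          _ = p u * d * p u + p u * d * p u := by rw [hidem u]
      exact left_eq_add.mp h2
    have hτd : τ d = 0 := by
      have h1 : τ (d * p u) = 0 := by
        have : d * p u = (d * p u) * p u := by
          rw [mul_assoc, hidem u]
        rw [this, htrace, ← mul_assoc, hpdp, map_zero]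
      have h2 : τ (p u * d) = 0 := by
        have : p u * d = p u * (p u * d) := by
          rw [← mul_assoc, hidem u]
        rw [this, htrace, hpdp, map_zero]
      rw [heq, map_add, h1, h2, add_zero]
    have h : HasDerivAt (⇑τ ∘ p) (τ d) u := (τ.restrictScalars ℝ).hasFDerivAt.comp_hasDerivAt u hp
    rw [hτd] at h
    exact h
  exact is_const_of_deriv_eq_zero (fun x => (key x).differentiableAt)
    (fun x => (key x).deriv) s t
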